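/- Two canonical gates Can(a,b,c) acting on qubits (q₀,q₁) and Can(a',b',c') acting on qubits (q₁,q₂), sharing exactly the qubit q₁, commute if and only if b = b' = c = c' = 0 (assuming both gates are nontrivial, i.e., the coefficient vectors are nonzero, and coefficients satisfy |c| ≤ b ≤ a ≤ 1/2 and |c'| ≤ b' ≤ a' ≤ 1/2). -/

import Mathlib

open Matrix Kronecker
set_option maxHeartbeats 1000000
noncomputable section

def PX : Matrix (Fin 2) (Fin 2) ℂ := !![0, 1; 1, 0]
def PY : Matrix (Fin 2) (Fin 2) ℂ := !![0, -Complex.I; Complex.I, 0]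
def PZ : Matrix (Fin 2) (Fin 2) ℂ := !![1, 0; 0, -1]

theorem hXX : PX * PX = 1 := by
  ext i j; fin_cases i <;> fin_cases j <;>
    simp [PX, Matrix.mul_apply, Fin.sum_univ_succ, Matrix.one_apply]
theorem hYY : PY * PY = 1 := by
  ext i j; fin_cases i <;> fin_cases j <;>
    simp [PY, Matrix.mul_apply, Fin.sum_univ_succ, Matrix.one_apply]
theorem hZZ : PZ * PZ = 1 := by
  ext i j; fin_cases i <;> fin_cases j <;>
    simp [PZ, Matrix.mul_apply, Fin.sum_univ_succ, Matrix.one_apply]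
theorem hXY : PX * PY = Complex.I • PZ := by
  ext i j; fin_cases i <;> fin_cases j <;>
    simp [PX, PY, PZ, Matrix.mul_apply, Fin.sum_univ_succ]
theorem hYX : PY * PX = (-Complex.I) • PZ := by
  ext i j; fin_cases i <;> fin_cases j <;>
    simp [PX, PY, PZ, Matrix.mul_apply, Fin.sum_univ_succ]
theorem hYZ : PY * PZ = Complex.I • PX := by
  ext i j; fin_cases i <;> fin_cases j <;>
    simp [PX, PY, PZ, Matrix.mul_apply, Fin.sum_univ_succ]
theorem hZY : PZ * PY = (-Complex.I) • PX := by
  ext i j; fin_cases i <;> fin_cases j <;>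
    simp [PX, PY, PZ, Matrix.mul_apply, Fin.sum_univ_succ]
theorem hZX : PZ * PX = Complex.I • PY := by
  ext i j; fin_cases i <;> fin_cases j <;>
    simp [PX, PY, PZ, Matrix.mul_apply, Fin.sum_univ_succ]
theorem hXZ : PX * PZ = (-Complex.I) • PY := by
  ext i j; fin_cases i <;> fin_cases j <;>
    simp [PX, PY, PZ, Matrix.mul_apply, Fin.sum_univ_succ]

abbrev Q3 := (Fin 2 × Fin 2) × Fin 2

theorem trip_mul (A B C D E F : Matrix (Fin 2) (Fin 2) ℂ) :
    ((A ⊗ₖ B) ⊗ₖ C) * ((D ⊗ₖ E) ⊗ₖ F) = ((A * D) ⊗ₖ (B * E)) ⊗ₖ (C * F) := by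
  rw [← Matrix.mul_kronecker_mul, ← Matrix.mul_kronecker_mul]

def X1 : Matrix Q3 Q3 ℂ := (PX ⊗ₖ PX) ⊗ₖ 1
def Y1 : Matrix Q3 Q3 ℂ := (PY ⊗ₖ PY) ⊗ₖ 1
def Z1 : Matrix Q3 Q3 ℂ := (PZ ⊗ₖ PZ) ⊗ₖ 1
def X2 : Matrix Q3 Q3 ℂ := (1 ⊗ₖ PX) ⊗ₖ PX
def Y2 : Matrix Q3 Q3 ℂ := (1 ⊗ₖ PY) ⊗ₖ PY
def Z2 : Matrix Q3 Q3 ℂ := (1 ⊗ₖ PZ) ⊗ₖ PZ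

theorem kron3_one : ((1 ⊗ₖ 1) ⊗ₖ (1 : Matrix (Fin 2) (Fin 2) ℂ)) = (1 : Matrix Q3 Q3 ℂ) := by
  rw [Matrix.one_kronecker_one, Matrix.one_kronecker_one]

-- in-gate products
theorem pX1X1 : X1 * X1 = 1 := by rw [X1, trip_mul, hXX, one_mul, kron3_one]
theorem pY1Y1 : Y1 * Y1 = 1 := by rw [Y1, trip_mul, hYY, one_mul, kron3_one]
theorem pZ1Z1 : Z1 * Z1 = 1 := by rw [Z1, trip_mul, hZZ, one_mul, kron3_one]
theorem pX1Y1 : X1 * Y1 = (-1 : ℂ) • Z1 := by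
  rw [X1, Y1, Z1, trip_mul, hXY, one_mul, Matrix.smul_kronecker, Matrix.kronecker_smul,
    Matrix.smul_kronecker, Matrix.smul_kronecker, smul_smul, Complex.I_mul_I]
theorem pY1X1 : Y1 * X1 = (-1 : ℂ) • Z1 := by
  rw [X1, Y1, Z1, trip_mul, hYX, one_mul, Matrix.smul_kronecker, Matrix.kronecker_smul,
    Matrix.smul_kronecker, Matrix.smul_kronecker, smul_smul]
  norm_num [Complex.I_mul_I]
theorem pY1Z1 : Y1 * Z1 = (-1 : ℂ) • X1 := by
  rw [Y1, Z1, X1, trip_mul, hYZ, one_mul, Matrix.smul_kronecker, Matrix.kronecker_smul,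
    Matrix.smul_kronecker, Matrix.smul_kronecker, smul_smul, Complex.I_mul_I]
theorem pZ1Y1 : Z1 * Y1 = (-1 : ℂ) • X1 := by
  rw [Z1, Y1, X1, trip_mul, hZY, one_mul, Matrix.smul_kronecker, Matrix.kronecker_smul,
    Matrix.smul_kronecker, Matrix.smul_kronecker, smul_smul]
  norm_num [Complex.I_mul_I]
theorem pZ1X1 : Z1 * X1 = (-1 : ℂ) • Y1 := by
  rw [Z1, X1, Y1, trip_mul, hZX, one_mul, Matrix.smul_kronecker, Matrix.kronecker_smul,
    Matrix.smul_kronecker, Matrix.smul_kronecker, smul_smul, Complex.I_mul_I]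
theorem pX1Z1 : X1 * Z1 = (-1 : ℂ) • Y1 := by
  rw [X1, Z1, Y1, trip_mul, hXZ, one_mul, Matrix.smul_kronecker, Matrix.kronecker_smul,
    Matrix.smul_kronecker, Matrix.smul_kronecker, smul_smul]
  norm_num [Complex.I_mul_I]

theorem pX2X2 : X2 * X2 = 1 := by rw [X2, trip_mul, hXX, one_mul, kron3_one]
theorem pY2Y2 : Y2 * Y2 = 1 := by rw [Y2, trip_mul, hYY, one_mul, kron3_one]
theorem pZ2Z2 : Z2 * Z2 = 1 := by rw [Z2, trip_mul, hZZ, one_mul, kron3_one]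
theorem pX2Y2 : X2 * Y2 = (-1 : ℂ) • Z2 := by
  rw [X2, Y2, Z2, trip_mul, hXY, one_mul, Matrix.kronecker_smul, Matrix.kronecker_smul,
    Matrix.smul_kronecker, smul_smul, Complex.I_mul_I]
theorem pY2X2 : Y2 * X2 = (-1 : ℂ) • Z2 := by
  rw [Y2, X2, Z2, trip_mul, hYX, one_mul, Matrix.kronecker_smul, Matrix.kronecker_smul,
    Matrix.smul_kronecker, smul_smul]
  norm_num [Complex.I_mul_I]
theorem pY2Z2 : Y2 * Z2 = (-1 : ℂ) • X2 := by
  rw [Y2, Z2, X2, trip_mul, hYZ, one_mul, Matrix.kronecker_smul, Matrix.kronecker_smul,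
    Matrix.smul_kronecker, smul_smul, Complex.I_mul_I]
theorem pZ2Y2 : Z2 * Y2 = (-1 : ℂ) • X2 := by
  rw [Z2, Y2, X2, trip_mul, hZY, one_mul, Matrix.kronecker_smul, Matrix.kronecker_smul,
    Matrix.smul_kronecker, smul_smul]
  norm_num [Complex.I_mul_I]
theorem pZ2X2 : Z2 * X2 = (-1 : ℂ) • Y2 := by
  rw [Z2, X2, Y2, trip_mul, hZX, one_mul, Matrix.kronecker_smul, Matrix.kronecker_smul,
    Matrix.smul_kronecker, smul_smul, Complex.I_mul_I]
theorem pX2Z2 : X2 * Z2 = (-1 : ℂ) • Y2 := by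
  rw [X2, Z2, Y2, trip_mul, hXZ, one_mul, Matrix.kronecker_smul, Matrix.kronecker_smul,
    Matrix.smul_kronecker, smul_smul]
  norm_num [Complex.I_mul_I]

def KXIX : Matrix Q3 Q3 ℂ := (PX ⊗ₖ 1) ⊗ₖ PX
def KYIY : Matrix Q3 Q3 ℂ := (PY ⊗ₖ 1) ⊗ₖ PY
def KZIZ : Matrix Q3 Q3 ℂ := (PZ ⊗ₖ 1) ⊗ₖ PZ
def M1 : Matrix Q3 Q3 ℂ := (PX ⊗ₖ PZ) ⊗ₖ PY
def M2 : Matrix Q3 Q3 ℂ := (PX ⊗ₖ PY) ⊗ₖ PZ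
def M3 : Matrix Q3 Q3 ℂ := (PY ⊗ₖ PZ) ⊗ₖ PX
def M4 : Matrix Q3 Q3 ℂ := (PY ⊗ₖ PX) ⊗ₖ PZ
def M5 : Matrix Q3 Q3 ℂ := (PZ ⊗ₖ PY) ⊗ₖ PX
def M6 : Matrix Q3 Q3 ℂ := (PZ ⊗ₖ PX) ⊗ₖ PY

theorem pX1X2 : X1 * X2 = KXIX := by rw [X1, X2, KXIX, trip_mul, hXX, mul_one, one_mul]
theorem pX2X1 : X2 * X1 = KXIX := by rw [X1, X2, KXIX, trip_mul, hXX, mul_one, one_mul]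
theorem pY1Y2 : Y1 * Y2 = KYIY := by rw [Y1, Y2, KYIY, trip_mul, hYY, mul_one, one_mul]
theorem pY2Y1 : Y2 * Y1 = KYIY := by rw [Y1, Y2, KYIY, trip_mul, hYY, mul_one, one_mul]
theorem pZ1Z2 : Z1 * Z2 = KZIZ := by rw [Z1, Z2, KZIZ, trip_mul, hZZ, mul_one, one_mul]
theorem pZ2Z1 : Z2 * Z1 = KZIZ := by rw [Z1, Z2, KZIZ, trip_mul, hZZ, mul_one, one_mul]

theorem pX1Y2 : X1 * Y2 = Complex.I • M1 := by
  rw [X1, Y2, M1, trip_mul, hXY, mul_one, one_mul, Matrix.kronecker_smul, Matrix.smul_kronecker]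
theorem pY2X1 : Y2 * X1 = (-Complex.I) • M1 := by
  rw [Y2, X1, M1, trip_mul, hYX, mul_one, one_mul, Matrix.kronecker_smul, Matrix.smul_kronecker]
theorem pX1Z2 : X1 * Z2 = (-Complex.I) • M2 := by
  rw [X1, Z2, M2, trip_mul, hXZ, mul_one, one_mul, Matrix.kronecker_smul, Matrix.smul_kronecker]
theorem pZ2X1 : Z2 * X1 = Complex.I • M2 := by
  rw [Z2, X1, M2, trip_mul, hZX, mul_one, one_mul, Matrix.kronecker_smul, Matrix.smul_kronecker]
theorem pY1X2 : Y1 * X2 = (-Complex.I) • M3 := by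
  rw [Y1, X2, M3, trip_mul, hYX, mul_one, one_mul, Matrix.kronecker_smul, Matrix.smul_kronecker]
theorem pX2Y1 : X2 * Y1 = Complex.I • M3 := by
  rw [X2, Y1, M3, trip_mul, hXY, mul_one, one_mul, Matrix.kronecker_smul, Matrix.smul_kronecker]
theorem pY1Z2 : Y1 * Z2 = Complex.I • M4 := by
  rw [Y1, Z2, M4, trip_mul, hYZ, mul_one, one_mul, Matrix.kronecker_smul, Matrix.smul_kronecker]
theorem pZ2Y1 : Z2 * Y1 = (-Complex.I) • M4 := by
  rw [Z2, Y1, M4, trip_mul, hZY, mul_one, one_mul, Matrix.kronecker_smul, Matrix.smul_kronecker]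
theorem pZ1X2 : Z1 * X2 = Complex.I • M5 := by
  rw [Z1, X2, M5, trip_mul, hZX, mul_one, one_mul, Matrix.kronecker_smul, Matrix.smul_kronecker]
theorem pX2Z1 : X2 * Z1 = (-Complex.I) • M5 := by
  rw [X2, Z1, M5, trip_mul, hXZ, mul_one, one_mul, Matrix.kronecker_smul, Matrix.smul_kronecker]
theorem pZ1Y2 : Z1 * Y2 = (-Complex.I) • M6 := by
  rw [Z1, Y2, M6, trip_mul, hZY, mul_one, one_mul, Matrix.kronecker_smul, Matrix.smul_kronecker]
theorem pY2Z1 : Y2 * Z1 = Complex.I • M6 := by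
  rw [Y2, Z1, M6, trip_mul, hYZ, mul_one, one_mul, Matrix.kronecker_smul, Matrix.smul_kronecker]

theorem I2' : Complex.I ^ 2 = -1 := Complex.I_sq
theorem I3' : Complex.I ^ 3 = -Complex.I := by rw [pow_succ, I2']; ring
theorem I4' : Complex.I ^ 4 = 1 := by rw [pow_succ, I3']; simp [Complex.I_mul_I]

def P12 (a b c : ℝ) : Matrix ((Fin 2 × Fin 2) × Fin 2) ((Fin 2 × Fin 2) × Fin 2) ℂ :=
  ((a : ℂ) • (PX ⊗ₖ PX) + (b : ℂ) • (PY ⊗ₖ PY) + (c : ℂ) • (PZ ⊗ₖ PZ)) ⊗ₖ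
    (1 : Matrix (Fin 2) (Fin 2) ℂ)

def P23 (a b c : ℝ) : Matrix ((Fin 2 × Fin 2) × Fin 2) ((Fin 2 × Fin 2) × Fin 2) ℂ :=
  (a : ℂ) • ((1 : Matrix (Fin 2) (Fin 2) ℂ) ⊗ₖ PX ⊗ₖ PX) +
    (b : ℂ) • ((1 : Matrix (Fin 2) (Fin 2) ℂ) ⊗ₖ PY ⊗ₖ PY) +
    (c : ℂ) • ((1 : Matrix (Fin 2) (Fin 2) ℂ) ⊗ₖ PZ ⊗ₖ PZ)

def Can12 (a b c : ℝ) : Matrix ((Fin 2 × Fin 2) × Fin 2) ((Fin 2 × Fin 2) × Fin 2) ℂ :=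
  NormedSpace.exp ((-(Real.pi / 2 : ℂ) * Complex.I) • P12 a b c)

def Can23 (a b c : ℝ) : Matrix ((Fin 2 × Fin 2) × Fin 2) ((Fin 2 × Fin 2) × Fin 2) ℂ :=
  NormedSpace.exp ((-(Real.pi / 2 : ℂ) * Complex.I) • P23 a b c)

theorem P12_eq (a b c : ℝ) : P12 a b c = (a : ℂ) • X1 + (b : ℂ) • Y1 + (c : ℂ) • Z1 := by
  rw [P12, Matrix.add_kronecker, Matrix.add_kronecker, Matrix.smul_kronecker,
    Matrix.smul_kronecker, Matrix.smul_kronecker]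
  rfl

theorem P23_eq (a b c : ℝ) : P23 a b c = (a : ℂ) • X2 + (b : ℂ) • Y2 + (c : ℂ) • Z2 := rfl

-- exponential lemmas from s1 (general algebra)
section general
open NormedSpace
variable {𝔸 : Type*} [NormedRing 𝔸] [NormedAlgebra ℂ 𝔸] [CompleteSpace 𝔸]

theorem exp_smul_idem (p : 𝔸) (hp : p * p = p) (s : ℂ) :
    exp (s • p) = 1 + (Complex.exp s - 1) • p := by
  have hpn : ∀ n : ℕ, p ^ (n + 1) = p := by
    intro n; induction n with
    | zero => simp
    | succ k ih => rw [pow_succ, ih, hp]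
  have hs : Summable fun n : ℕ => ((n.factorial : ℂ))⁻¹ • s ^ n := expSeries_summable' s
  have hs' : Summable fun n : ℕ => (((n+1).factorial : ℂ))⁻¹ • s ^ (n+1) :=
    (summable_nat_add_iff 1).2 hs
  have hexp : Complex.exp s = 1 + ∑' n : ℕ, (((n+1).factorial : ℂ))⁻¹ • s ^ (n+1) := by
    rw [Complex.exp_eq_exp_ℂ]; simp only [exp_eq_tsum ℂ]; rw [Summable.tsum_eq_zero_add hs]
    simp
  have hA : Summable fun n : ℕ => ((n.factorial : ℂ))⁻¹ • (s • p) ^ n := expSeries_summable' _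
  simp only [exp_eq_tsum ℂ]; rw [Summable.tsum_eq_zero_add hA]
  have h1 : ∀ n : ℕ, (((n+1).factorial : ℂ))⁻¹ • (s • p) ^ (n+1)
      = ((((n+1).factorial : ℂ))⁻¹ • s ^ (n+1)) • p := by
    intro n; rw [smul_pow, hpn, smul_smul, smul_eq_mul]
  simp only [h1]
  rw [Summable.tsum_smul_const hs', hexp]
  simp

theorem exp_smul_invol (M : 𝔸) (hM : M * M = 1) (s : ℂ) :
    exp (s • M) = Complex.cosh s • 1 + Complex.sinh s • M := by
  have hp : ((2⁻¹ : ℂ) • (1 + M)) * ((2⁻¹ : ℂ) • (1 + M)) = (2⁻¹ : ℂ) • (1 + M) := by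
    simp only [smul_mul_assoc, mul_smul_comm, add_mul, mul_add, one_mul, mul_one, hM]
    match_scalars <;> ring
  have hq : ((2⁻¹ : ℂ) • (1 - M)) * ((2⁻¹ : ℂ) • (1 - M)) = (2⁻¹ : ℂ) • (1 - M) := by
    simp only [smul_mul_assoc, mul_smul_comm, sub_mul, mul_sub, one_mul, mul_one, hM]
    match_scalars <;> ring
  have hcomm : Commute (s • ((2⁻¹ : ℂ) • (1 + M))) ((-s) • ((2⁻¹ : ℂ) • (1 - M))) := by
    apply Commute.smul_left; apply Commute.smul_right
    apply Commute.smul_left; apply Commute.smul_right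
    unfold Commute SemiconjBy
    simp only [add_mul, mul_add, sub_mul, mul_sub, one_mul, mul_one, hM]
    abel
  have hsplit : s • M = s • ((2⁻¹ : ℂ) • (1 + M)) + (-s) • ((2⁻¹ : ℂ) • (1 - M)) := by
    match_scalars <;> ring
  let +nondep : NormedAlgebra ℚ 𝔸 := .restrictScalars ℚ ℂ 𝔸
  rw [hsplit, exp_add_of_commute hcomm, exp_smul_idem _ hp, exp_smul_idem _ hq]
  simp only [Complex.cosh, Complex.sinh, mul_add, add_mul, one_mul, mul_one,
    smul_mul_assoc, mul_smul_comm, smul_smul, sub_mul, mul_sub, hM, smul_add, smul_sub]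
  match_scalars <;> ring

end general

theorem exp_term (x : ℝ) (M : Matrix Q3 Q3 ℂ) (hM : M * M = 1) :
    NormedSpace.exp ((-(x : ℂ) * Complex.I) • M)
      = (Real.cos x : ℂ) • (1 : Matrix Q3 Q3 ℂ) + (-((Real.sin x : ℂ) * Complex.I)) • M := by
  letI : SeminormedRing (Matrix Q3 Q3 ℂ) := Matrix.linftyOpSemiNormedRing
  letI : NormedRing (Matrix Q3 Q3 ℂ) := Matrix.linftyOpNormedRing
  letI : NormedAlgebra ℂ (Matrix Q3 Q3 ℂ) := Matrix.linftyOpNormedAlgebra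
  refine (exp_smul_invol M hM _).trans ?_
  rw [neg_mul, Complex.cosh_neg, Complex.sinh_neg, Complex.cosh_mul_I,
    Complex.sinh_mul_I, Complex.ofReal_cos, Complex.ofReal_sin]

def cA (x : ℝ) : ℂ := (Real.cos (Real.pi * x / 2) : ℂ)
def sA (x : ℝ) : ℂ := (Real.sin (Real.pi * x / 2) : ℂ)

theorem can12_eq (a b c : ℝ) :
    Can12 a b c =
      (cA a * cA b * cA c - sA a * sA b * sA c * Complex.I) • (1 : Matrix Q3 Q3 ℂ)
      + (cA a * sA b * sA c - sA a * cA b * cA c * Complex.I) • X1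
      + (sA a * cA b * sA c - cA a * sA b * cA c * Complex.I) • Y1
      + (sA a * sA b * cA c - cA a * cA b * sA c * Complex.I) • Z1 := by
  rw [Can12, P12_eq]
  have hsplit : ((-(Real.pi / 2 : ℂ)) * Complex.I) • ((a : ℂ) • X1 + (b : ℂ) • Y1 + (c : ℂ) • Z1)
      = (-(((Real.pi * a / 2 : ℝ)) : ℂ) * Complex.I) • X1
        + ((-(((Real.pi * b / 2 : ℝ)) : ℂ) * Complex.I) • Y1
          + (-(((Real.pi * c / 2 : ℝ)) : ℂ) * Complex.I) • Z1) := by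
    push_cast
    match_scalars <;> ring
  rw [hsplit]
  have cXY : Commute X1 Y1 := pX1Y1.trans pY1X1.symm
  have cXZ : Commute X1 Z1 := pX1Z1.trans pZ1X1.symm
  have cYZ : Commute Y1 Z1 := pY1Z1.trans pZ1Y1.symm
  rw [Matrix.exp_add_of_commute _ _ (((cXY.smul_left _).smul_right _).add_right
    (((cXZ.smul_left _).smul_right _)))]
  rw [Matrix.exp_add_of_commute _ _ ((cYZ.smul_left _).smul_right _)]
  rw [exp_term _ _ pX1X1, exp_term _ _ pY1Y1, exp_term _ _ pZ1Z1]
  simp only [cA, sA, add_mul, mul_add, smul_mul_assoc, mul_smul_comm, smul_smul, one_mul,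
    mul_one, pX1Y1, pX1Z1, pY1Z1, pX1X1, pY1Y1, pZ1Z1, pY1X1, pZ1X1, pZ1Y1]
  match_scalars <;> (ring_nf; simp only [I2', I3', I4']; ring_nf)

theorem can23_eq (a b c : ℝ) :
    Can23 a b c =
      (cA a * cA b * cA c - sA a * sA b * sA c * Complex.I) • (1 : Matrix Q3 Q3 ℂ)
      + (cA a * sA b * sA c - sA a * cA b * cA c * Complex.I) • X2
      + (sA a * cA b * sA c - cA a * sA b * cA c * Complex.I) • Y2
      + (sA a * sA b * cA c - cA a * cA b * sA c * Complex.I) • Z2 := by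
  rw [Can23, P23_eq]
  have hsplit : ((-(Real.pi / 2 : ℂ)) * Complex.I) • ((a : ℂ) • X2 + (b : ℂ) • Y2 + (c : ℂ) • Z2)
      = (-(((Real.pi * a / 2 : ℝ)) : ℂ) * Complex.I) • X2
        + ((-(((Real.pi * b / 2 : ℝ)) : ℂ) * Complex.I) • Y2
          + (-(((Real.pi * c / 2 : ℝ)) : ℂ) * Complex.I) • Z2) := by
    push_cast
    match_scalars <;> ring
  rw [hsplit]
  have cXY : Commute X2 Y2 := pX2Y2.trans pY2X2.symm
  have cXZ : Commute X2 Z2 := pX2Z2.trans pZ2X2.symm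
  have cYZ : Commute Y2 Z2 := pY2Z2.trans pZ2Y2.symm
  rw [Matrix.exp_add_of_commute _ _ (((cXY.smul_left _).smul_right _).add_right
    (((cXZ.smul_left _).smul_right _)))]
  rw [Matrix.exp_add_of_commute _ _ ((cYZ.smul_left _).smul_right _)]
  rw [exp_term _ _ pX2X2, exp_term _ _ pY2Y2, exp_term _ _ pZ2Z2]
  simp only [cA, sA, add_mul, mul_add, smul_mul_assoc, mul_smul_comm, smul_smul, one_mul,
    mul_one, pX2Y2, pX2Z2, pY2Z2, pX2X2, pY2Y2, pZ2Z2, pY2X2, pZ2X2, pZ2Y2]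
  match_scalars <;> (ring_nf; simp only [I2', I3', I4']; ring_nf)

theorem canonical_gates_commute_iff
    (a b c a' b' c' : ℝ)
    (h1 : |c| ≤ b) (h1' : b ≤ a) (h1'' : a ≤ 1 / 2)
    (h2 : |c'| ≤ b') (h2' : b' ≤ a') (h2'' : a' ≤ 1 / 2)
    (hne : ¬(a = 0 ∧ b = 0 ∧ c = 0)) (hne' : ¬(a' = 0 ∧ b' = 0 ∧ c' = 0)) :
    Commute (Can12 a b c) (Can23 a' b' c') ↔ (b = 0 ∧ b' = 0 ∧ c = 0 ∧ c' = 0) := by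
  constructor
  · intro h
    have heq := h.eq
    rw [can12_eq, can23_eq] at heq
    simp only [add_mul, mul_add, smul_mul_assoc, mul_smul_comm, smul_smul, one_mul, mul_one,
      pX1X2, pX2X1, pY1Y2, pY2Y1, pZ1Z2, pZ2Z1, pX1Y2, pY2X1, pX1Z2, pZ2X1, pY1X2, pX2Y1,
      pY1Z2, pZ2Y1, pZ1X2, pX2Z1, pZ1Y2, pY2Z1] at heq
    have E := Matrix.ext_iff.mpr heq
    have e1 := E ((0,0),0) ((1,0),1)
    have e2 := E ((0,0),1) ((1,0),0)
    simp only [Matrix.add_apply, Matrix.smul_apply, Matrix.one_apply, X1, Y1, Z1, X2, Y2, Z2,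
      KXIX, KYIY, KZIZ, M1, M2, M3, M4, M5, M6, PX, PY, PZ, Matrix.kroneckerMap_apply,
      smul_eq_mul, Matrix.cons_val', Matrix.cons_val_zero, Matrix.cons_val_one, Matrix.head_cons,
      Matrix.empty_val', Matrix.cons_val_fin_one, Matrix.head_fin_const, Matrix.one_apply,
      Prod.mk.injEq, ite_true, ite_false, and_self, and_false, false_and, if_false,
      mul_zero, zero_mul, mul_one, one_mul, add_zero, zero_add, mul_neg, neg_mul, neg_neg] at e1 e2
    norm_num at e1 e2
    have q1 : (cA a * sA b * sA c - sA a * cA b * cA c * Complex.I) * (sA a' * cA b' * sA c' - cA a' * sA b' * cA c' * Complex.I) - (sA a * cA b * sA c - cA a * sA b * cA c * Complex.I) * (cA a' * sA b' * sA c' - sA a' * cA b' * cA c' * Complex.I) = 0 := by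
      linear_combination e1 / 2 + ((cA a * sA b * sA c - sA a * cA b * cA c * Complex.I) * (sA a' * cA b' * sA c' - cA a' * sA b' * cA c' * Complex.I) - (sA a * cA b * sA c - cA a * sA b * cA c * Complex.I) * (cA a' * sA b' * sA c' - sA a' * cA b' * cA c' * Complex.I)) * Complex.I_mul_I
    have q2 : (cA a * sA b * sA c - sA a * cA b * cA c * Complex.I) * (sA a' * cA b' * sA c' - cA a' * sA b' * cA c' * Complex.I) + (sA a * cA b * sA c - cA a * sA b * cA c * Complex.I) * (cA a' * sA b' * sA c' - sA a' * cA b' * cA c' * Complex.I) = 0 := by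
      linear_combination -e2 / 2 + ((cA a * sA b * sA c - sA a * cA b * cA c * Complex.I) * (sA a' * cA b' * sA c' - cA a' * sA b' * cA c' * Complex.I) + (sA a * cA b * sA c - cA a * sA b * cA c * Complex.I) * (cA a' * sA b' * sA c' - sA a' * cA b' * cA c' * Complex.I)) * Complex.I_mul_I
    have hq12 : (cA a * sA b * sA c - sA a * cA b * cA c * Complex.I) * (sA a' * cA b' * sA c' - cA a' * sA b' * cA c' * Complex.I) = 0 := by linear_combination (q1 + q2) / 2
    have hq21 : (sA a * cA b * sA c - cA a * sA b * cA c * Complex.I) * (cA a' * sA b' * sA c' - sA a' * cA b' * cA c' * Complex.I) = 0 := by linear_combination (q2 - q1) / 2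
    -- positivity facts
    have hπ := Real.pi_pos
    have hcos : ∀ x : ℝ, |x| ≤ 1 / 2 → 0 < Real.cos (Real.pi * x / 2) := by
      intro x hx
      rcases abs_le.mp hx with ⟨hl, hr⟩
      apply Real.cos_pos_of_mem_Ioo
      constructor <;> [skip; skip] <;> nlinarith
    have hsin : ∀ x : ℝ, 0 < x → x ≤ 1 / 2 → 0 < Real.sin (Real.pi * x / 2) := by
      intro x hx hx2
      apply Real.sin_pos_of_pos_of_lt_pi <;> nlinarith
    have hsin0 : ∀ x : ℝ, 0 ≤ x → x ≤ 1 / 2 → Real.sin (Real.pi * x / 2) = 0 → x = 0 := by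
      intro x hx hx2 hs
      by_contra hne0
      exact absurd hs (ne_of_gt (hsin x (lt_of_le_of_ne hx (Ne.symm hne0)) hx2))
    have hbnn : 0 ≤ b := le_trans (abs_nonneg c) h1
    have hbnn' : 0 ≤ b' := le_trans (abs_nonneg c') h2
    have hann : 0 ≤ a := le_trans hbnn h1'
    have hann' : 0 ≤ a' := le_trans hbnn' h2'
    have hapos : 0 < a := by
      rcases lt_or_eq_of_le hann with h0 | h0
      · exact h0
      · exfalso
        apply hne
        have hb0 : b = 0 := le_antisymm (h0 ▸ h1') hbnn
        have hc0 : c = 0 := abs_eq_zero.mp (le_antisymm (hb0 ▸ h1) (abs_nonneg c))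
        exact ⟨h0.symm, hb0, hc0⟩
    have hapos' : 0 < a' := by
      rcases lt_or_eq_of_le hann' with h0 | h0
      · exact h0
      · exfalso
        apply hne'
        have hb0 : b' = 0 := le_antisymm (h0 ▸ h2') hbnn'
        have hc0 : c' = 0 := abs_eq_zero.mp (le_antisymm (hb0 ▸ h2) (abs_nonneg c'))
        exact ⟨h0.symm, hb0, hc0⟩
    have habs : |a| ≤ 1/2 := by rw [abs_of_nonneg hann]; exact h1''
    have habs' : |a'| ≤ 1/2 := by rw [abs_of_nonneg hann']; exact h2''
    have hbabs : |b| ≤ 1/2 := by rw [abs_of_nonneg hbnn]; linarith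
    have hbabs' : |b'| ≤ 1/2 := by rw [abs_of_nonneg hbnn']; linarith
    have hcabs : |c| ≤ 1/2 := by
      refine le_trans ?_ hbabs; rw [abs_of_nonneg hbnn]; exact h1
    have hcabs' : |c'| ≤ 1/2 := by
      refine le_trans ?_ hbabs'; rw [abs_of_nonneg hbnn']; exact h2
    -- extraction helper
    have reim : ∀ x y : ℝ, (x : ℂ) - (y : ℂ) * Complex.I = 0 → x = 0 ∧ y = 0 := by
      intro x y hxy
      have hre := congrArg Complex.re hxy
      have him := congrArg Complex.im hxy
      simp at hre him
      exact ⟨hre, him⟩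
    have hA1ne : (cA a * sA b * sA c - sA a * cA b * cA c * Complex.I) ≠ 0 := by
      intro h0
      have h0' : ((Real.cos (Real.pi * a / 2) * Real.sin (Real.pi * b / 2)
          * Real.sin (Real.pi * c / 2) : ℝ) : ℂ)
          - ((Real.sin (Real.pi * a / 2) * Real.cos (Real.pi * b / 2)
          * Real.cos (Real.pi * c / 2) : ℝ) : ℂ) * Complex.I = 0 := by
        push_cast
        simp only [cA, sA] at h0
        push_cast at h0
        linear_combination h0
      have him := (reim _ _ h0').2
      have : 0 < Real.sin (Real.pi * a / 2) * Real.cos (Real.pi * b / 2)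
          * Real.cos (Real.pi * c / 2) :=
        mul_pos (mul_pos (hsin a hapos h1'') (hcos b hbabs)) (hcos c hcabs)
      exact absurd him (ne_of_gt this)
    have hB1ne : (cA a' * sA b' * sA c' - sA a' * cA b' * cA c' * Complex.I) ≠ 0 := by
      intro h0
      have h0' : ((Real.cos (Real.pi * a' / 2) * Real.sin (Real.pi * b' / 2)
          * Real.sin (Real.pi * c' / 2) : ℝ) : ℂ)
          - ((Real.sin (Real.pi * a' / 2) * Real.cos (Real.pi * b' / 2)
          * Real.cos (Real.pi * c' / 2) : ℝ) : ℂ) * Complex.I = 0 := by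
        push_cast
        simp only [cA, sA] at h0
        push_cast at h0
        linear_combination h0
      have him := (reim _ _ h0').2
      have : 0 < Real.sin (Real.pi * a' / 2) * Real.cos (Real.pi * b' / 2)
          * Real.cos (Real.pi * c' / 2) :=
        mul_pos (mul_pos (hsin a' hapos' h2'') (hcos b' hbabs')) (hcos c' hcabs')
      exact absurd him (ne_of_gt this)
    have hB2z : (sA a' * cA b' * sA c' - cA a' * sA b' * cA c' * Complex.I) = 0 := by
      rcases mul_eq_zero.mp hq12 with h0 | h0
      · exact absurd h0 hA1ne
      · exact h0
    have hA2z : (sA a * cA b * sA c - cA a * sA b * cA c * Complex.I) = 0 := by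
      rcases mul_eq_zero.mp hq21 with h0 | h0
      · exact h0
      · exact absurd h0 hB1ne
    -- B2 = 0 → b' = 0 ∧ c' = 0
    have hB2' : ((Real.sin (Real.pi * a' / 2) * Real.cos (Real.pi * b' / 2)
        * Real.sin (Real.pi * c' / 2) : ℝ) : ℂ)
        - ((Real.cos (Real.pi * a' / 2) * Real.sin (Real.pi * b' / 2)
        * Real.cos (Real.pi * c' / 2) : ℝ) : ℂ) * Complex.I = 0 := by
      push_cast
      simp only [cA, sA] at hB2z
      push_cast at hB2z
      linear_combination hB2z
    have hsb' : Real.sin (Real.pi * b' / 2) = 0 := by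
      have him := (reim _ _ hB2').2
      have hca' := hcos a' habs'
      have hcc' := hcos c' hcabs'
      by_contra hne0
      have hpos : 0 < Real.sin (Real.pi * b' / 2) := hsin b'
        (lt_of_le_of_ne hbnn' (fun h => hne0 (by rw [← h]; simp))) (by linarith)
      nlinarith [mul_pos (mul_pos hca' hpos) hcc']
    have hb'0 : b' = 0 := hsin0 b' hbnn' (by linarith) hsb'
    have hc'0 : c' = 0 := abs_eq_zero.mp (le_antisymm (hb'0 ▸ h2) (abs_nonneg c'))
    -- A2 = 0 → b = 0 ∧ c = 0
    have hA2' : ((Real.sin (Real.pi * a / 2) * Real.cos (Real.pi * b / 2)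
        * Real.sin (Real.pi * c / 2) : ℝ) : ℂ)
        - ((Real.cos (Real.pi * a / 2) * Real.sin (Real.pi * b / 2)
        * Real.cos (Real.pi * c / 2) : ℝ) : ℂ) * Complex.I = 0 := by
      push_cast
      simp only [cA, sA] at hA2z
      push_cast at hA2z
      linear_combination hA2z
    have hsb : Real.sin (Real.pi * b / 2) = 0 := by
      have him := (reim _ _ hA2').2
      have hca := hcos a habs
      have hcc := hcos c hcabs
      by_contra hne0
      have hpos : 0 < Real.sin (Real.pi * b / 2) := hsin b
        (lt_of_le_of_ne hbnn (fun h => hne0 (by rw [← h]; simp))) (by linarith)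
      nlinarith [mul_pos (mul_pos hca hpos) hcc]
    have hb0 : b = 0 := hsin0 b hbnn (by linarith) hsb
    have hc0 : c = 0 := abs_eq_zero.mp (le_antisymm (hb0 ▸ h1) (abs_nonneg c))
    exact ⟨hb0, hb'0, hc0, hc'0⟩
  · rintro ⟨hb, hb', hc, hc'⟩
    subst hb hb' hc hc'
    have hP12 : P12 a 0 0 = (a : ℂ) • X1 := by
      rw [P12_eq]; push_cast; rw [zero_smul, zero_smul, add_zero, add_zero]
    have hP23 : P23 a' 0 0 = (a' : ℂ) • X2 := by
      rw [P23_eq]; push_cast; rw [zero_smul, zero_smul, add_zero, add_zero]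
    have hc : Commute ((-(Real.pi / 2 : ℂ) * Complex.I) • P12 a 0 0)
        ((-(Real.pi / 2 : ℂ) * Complex.I) • P23 a' 0 0) := by
      rw [hP12, hP23]
      have cX : Commute X1 X2 := pX1X2.trans pX2X1.symm
      exact ((cX.smul_right _).smul_left _).smul_right _ |>.smul_left _
    exact hc.exp
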